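/- (Corollary 5, safety-critical control of neutral control systems) Let E be a real Banach space, τ > 0, m ∈ ℕ, 𝓕 : C([-τ,0], E) × C([-τ,0], E) → E, and 𝓖 : C([-τ,0], E) × C([-τ,0], E) → L(ℝᵐ, E). Let u : ℝ → ℝᵐ and let x : ℝ → E be continuously differentiable satisfying the neutral closed-loop dynamics ẋ(t) = 𝓕(x_t, ẋ_t) + 𝓖(x_t, ẋ_t)(u(t)) for all t ≥ 0, where x_t(θ) = x(t+θ) and ẋ_t(θ) = x'(t+θ). Let 𝓗 : C([-τ,0], E) → ℝ be Fréchet differentiable and let α : ℝ → ℝ be continuous, strictly increasing with α(0) = 0. Suppose that for all t ≥ 0, D𝓗(x_t)(ẋ_t) ≥ -α(𝓗(x_t)). If 𝓗(x_0) ≥ 0, then 𝓗(x_t) ≥ 0 for all t ≥ 0. -/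

import Mathlib

/-- History segment `x_t ∈ C([-τ,0], E)` of a continuous curve `x : ℝ → E`,
defined by `x_t θ = x (t + θ)`. -/
noncomputable def histSegment {E : Type*} [NormedAddCommGroup E]
    (τ : ℝ) (x : ℝ → E) (hx : Continuous x) (t : ℝ) :
    C(Set.Icc (-τ) (0 : ℝ), E) :=
  ⟨fun θ => x (t + θ), hx.comp (continuous_const.add continuous_subtype_val)⟩

lemma histSegment_hasDerivAt {E : Type*} [NormedAddCommGroup E] [NormedSpace ℝ E]
    (τ : ℝ) (x x' : ℝ → E) (hx : Continuous x) (hx' : Continuous x')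
    (hd : ∀ t : ℝ, HasDerivAt x (x' t) t) (t : ℝ) :
    HasDerivAt (fun s => histSegment τ x hx s) (histSegment τ x' hx' t) t := by
  rw [hasDerivAt_iff_isLittleO, Asymptotics.isLittleO_iff]
  intro ε hε
  have hK : IsCompact (Set.Icc (t - τ - 1) (t + 1)) := isCompact_Icc
  have huc := hK.uniformContinuousOn_of_continuous hx'.continuousOn
  rw [Metric.uniformContinuousOn_iff] at huc
  obtain ⟨δ, hδ, hδ'⟩ := huc ε hε
  filter_upwards [eventually_abs_sub_lt t (lt_min hδ one_pos)] with y hy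
  have hy1 : |y - t| < 1 := lt_of_lt_of_le hy (min_le_right _ _)
  have hyδ : |y - t| < δ := lt_of_lt_of_le hy (min_le_left _ _)
  rw [Real.norm_eq_abs]
  apply (ContinuousMap.norm_le _ (mul_nonneg hε.le (abs_nonneg _))).2
  intro θ
  obtain ⟨hθ1, hθ2⟩ := θ.2
  set θv : ℝ := (θ : ℝ)
  have key : ∀ s ∈ Set.uIcc t y, |s - t| ≤ |y - t| := by
    intro s hs
    rcases Set.mem_uIcc.1 hs with ⟨h1, h2⟩ | ⟨h1, h2⟩
    · rw [abs_of_nonneg (by linarith)]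
      calc s - t ≤ y - t := by linarith
        _ ≤ |y - t| := le_abs_self _
    · rw [abs_of_nonpos (by linarith), abs_sub_comm]
      have := le_abs_self (t - y)
      linarith
  have hmem : ∀ s ∈ Set.uIcc t y, s + θv ∈ Set.Icc (t - τ - 1) (t + 1) := by
    intro s hs
    have h1 := (abs_le.1 ((key s hs).trans hy1.le))
    constructor <;> [linarith [h1.1]; linarith [h1.2]]
  have hbound : ∀ s ∈ Set.uIcc t y, ‖x' (s + θv) - x' (t + θv)‖ ≤ ε := by
    intro s hs
    have hs1 := hmem s hs
    have ht1 : t + θv ∈ Set.Icc (t - τ - 1) (t + 1) := ⟨by linarith, by linarith⟩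
    have hdist : dist (s + θv) (t + θv) < δ := by
      rw [Real.dist_eq]
      have : s + θv - (t + θv) = s - t := by ring
      rw [this]
      exact lt_of_le_of_lt (key s hs) hyδ
    have := hδ' _ hs1 _ ht1 hdist
    rw [dist_eq_norm] at this
    exact this.le
  -- mean value inequality on g s = x (s + θv) - s • x' (t + θv)
  have hg : ∀ s ∈ Set.uIcc t y,
      HasDerivWithinAt (fun s => x (s + θv) - s • x' (t + θv))
        (x' (s + θv) - x' (t + θv)) (Set.uIcc t y) s := by
    intro s _
    have h1 : HasDerivAt (fun s : ℝ => x (s + θv)) ((1 : ℝ) • x' (s + θv)) s :=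
      (hd (s + θv)).scomp s ((hasDerivAt_id s).add_const θv)
    have h2 : HasDerivAt (fun s : ℝ => s • x' (t + θv)) ((1 : ℝ) • x' (t + θv)) s :=
      (hasDerivAt_id s).smul_const _
    have h3 := h1.sub h2
    simp only [one_smul] at h3
    exact h3.hasDerivWithinAt
  have := (convex_uIcc t y).norm_image_sub_le_of_norm_hasDerivWithin_le hg hbound
    (Set.left_mem_uIcc) (Set.right_mem_uIcc)
  have hval : (histSegment τ x hx y - histSegment τ x hx t
      - (y - t) • histSegment τ x' hx' t) θ
      = (x (y + θv) - y • x' (t + θv)) - (x (t + θv) - t • x' (t + θv)) := by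
    simp [histSegment, sub_smul]
    abel
  rw [hval]
  calc ‖(x (y + θv) - y • x' (t + θv)) - (x (t + θv) - t • x' (t + θv))‖
      ≤ ε * ‖y - t‖ := this
    _ = ε * |y - t| := by rw [Real.norm_eq_abs]


/-- Corollary 5: safety-critical control of neutral control systems. If `x` satisfies
the neutral closed loop `ẋ(t) = 𝓕(x_t, ẋ_t) + 𝓖(x_t, ẋ_t)(u(t))` for `t ≥ 0`, `𝓗` is
Fréchet differentiable, `α` is continuous, strictly increasing with `α 0 = 0`, and
`D𝓗(x_t)(ẋ_t) ≥ -α(𝓗(x_t))` for all `t ≥ 0`, then `𝓗(x_0) ≥ 0` implies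
`𝓗(x_t) ≥ 0` for all `t ≥ 0`. -/
theorem statement11 (E : Type*) [NormedAddCommGroup E] [NormedSpace ℝ E] [CompleteSpace E]
    (τ : ℝ) (hτ : 0 < τ) (m : ℕ)
    (F : C(Set.Icc (-τ) (0 : ℝ), E) → C(Set.Icc (-τ) (0 : ℝ), E) → E)
    (G : C(Set.Icc (-τ) (0 : ℝ), E) → C(Set.Icc (-τ) (0 : ℝ), E) →
      (EuclideanSpace ℝ (Fin m) →L[ℝ] E))
    (u : ℝ → EuclideanSpace ℝ (Fin m))
    (x x' : ℝ → E) (hx : Continuous x) (hx' : Continuous x')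
    (hd : ∀ t : ℝ, HasDerivAt x (x' t) t)
    (hode : ∀ t ≥ (0 : ℝ),
      x' t = F (histSegment τ x hx t) (histSegment τ x' hx' t) +
        G (histSegment τ x hx t) (histSegment τ x' hx' t) (u t))
    (H : C(Set.Icc (-τ) (0 : ℝ), E) → ℝ)
    (DH : C(Set.Icc (-τ) (0 : ℝ), E) → (C(Set.Icc (-τ) (0 : ℝ), E) →L[ℝ] ℝ))
    (hH : ∀ φ : C(Set.Icc (-τ) (0 : ℝ), E), HasFDerivAt H (DH φ) φ)
    (α : ℝ → ℝ) (hα_cont : Continuous α) (hα_mono : StrictMono α) (hα0 : α 0 = 0)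
    (hsafe : ∀ t ≥ (0 : ℝ),
      DH (histSegment τ x hx t) (histSegment τ x' hx' t) ≥ -α (H (histSegment τ x hx t)))
    (h0 : H (histSegment τ x hx 0) ≥ 0) :
    ∀ t ≥ (0 : ℝ), H (histSegment τ x hx t) ≥ 0 := by
  set φ : ℝ → ℝ := fun s => H (histSegment τ x hx s) with hφdef
  have hhd : ∀ s : ℝ, HasDerivAt φ
      (DH (histSegment τ x hx s) (histSegment τ x' hx' s)) s := fun s =>
    (hH _).comp_hasDerivAt s (histSegment_hasDerivAt τ x x' hx hx' hd s)
  have hφcont : Continuous φ :=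
    continuous_iff_continuousAt.2 fun s => (hhd s).continuousAt
  intro t1 ht1
  by_contra hneg
  push_neg at hneg
  have ht1pos : 0 < t1 := by
    rcases eq_or_lt_of_le ht1 with h | h
    · exfalso; rw [← h] at hneg; linarith
    · exact h
  set S : Set ℝ := Set.Icc 0 t1 ∩ {s | 0 ≤ φ s} with hSdef
  have hSclosed : IsClosed S :=
    isClosed_Icc.inter (isClosed_le continuous_const hφcont)
  have hSne : S.Nonempty := ⟨0, ⟨le_refl _, ht1pos.le⟩, h0⟩
  have hSbdd : BddAbove S := BddAbove.mono (Set.inter_subset_left) bddAbove_Icc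
  set t0 : ℝ := sSup S with ht0def
  have ht0mem : t0 ∈ S := hSclosed.csSup_mem hSne hSbdd
  obtain ⟨⟨ht00, ht01⟩, ht0φ⟩ := ht0mem
  have ht0lt : t0 < t1 := lt_of_le_of_ne ht01 (by
    intro h; rw [h] at ht0φ; exact absurd ht0φ (not_le.2 hneg))
  have hmono : StrictMonoOn φ (Set.Icc t0 t1) := by
    apply strictMonoOn_of_deriv_pos (convex_Icc _ _) hφcont.continuousOn
    intro s hs
    rw [interior_Icc] at hs
    have hsφ : φ s < 0 := by
      by_contra hc
      push_neg at hc
      have : s ∈ S := ⟨⟨le_trans ht00 hs.1.le, hs.2.le⟩, hc⟩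
      exact absurd (le_csSup hSbdd this) (not_le.2 hs.1)
    have hs0 : (0 : ℝ) ≤ s := le_trans ht00 hs.1.le
    have := hsafe s hs0
    have hα : α (φ s) < 0 := by
      rw [← hα0]; exact hα_mono hsφ
    rw [(hhd s).deriv]
    calc (0 : ℝ) < -α (φ s) := by linarith
      _ ≤ DH (histSegment τ x hx s) (histSegment τ x' hx' s) := this
  have hlt := hmono ⟨le_refl _, ht0lt.le⟩ ⟨ht0lt.le, le_refl _⟩ ht0lt
  have h1 : φ t1 < 0 := hneg
  have h2 : (0 : ℝ) ≤ φ t0 := ht0φ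
  linarith
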